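/- (Welfare loss of the FLOOR strategy.) Let M be a positive integer, δ > 0, and let f̃ : 2^𝒩 → ℤ be an integer-valued rank function with f̃(𝒩) = M; write P̃ for the integral polymatroid defined by f̃. For each n ∈ 𝒩, let u_n, ũ_n : {0,1,…,M} → ℝ satisfy u_n(y) − yδ ≤ ũ_n(y) ≤ u_n(y) for every integer 0 ≤ y ≤ M. If ỹ* maximizes ∑_{n=1}^N ũ_n(y_n) over P̃, then for every y ∈ P̃: ∑_{n=1}^N u_n(y_n) − ∑_{n=1}^N u_n(ỹ*_n) ≤ Mδ. -/

import Mathlib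

open Finset

/-- Welfare loss of the FLOOR strategy. If each reported utility `ũ_n`
satisfies `u_n(y) − yδ ≤ ũ_n(y) ≤ u_n(y)` on `{0,…,M}` and `ỹ*` maximizes `∑_n ũ_n(y_n)`
over the integral polymatroid `P̃` of `f̃` (with `f̃(𝒩) = M`), then for every `y ∈ P̃`
the welfare loss `∑_n u_n(y_n) − ∑_n u_n(ỹ*_n)` is at most `Mδ`. -/
theorem quantizedVCG_statement_14 (N M : ℕ) (hN : 1 ≤ N) (hM : 0 < M)
    (δ : ℝ) (hδ : 0 < δ)
    (ft : Finset (Fin N) → ℤ)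
    (hf_norm : ft ∅ = 0)
    (hf_mono : ∀ S T : Finset (Fin N), S ⊆ T → ft S ≤ ft T)
    (hf_sub : ∀ S T : Finset (Fin N), ft (S ∩ T) + ft (S ∪ T) ≤ ft S + ft T)
    (hf_univ : ft Finset.univ = M)
    (u ut : Fin N → ℕ → ℝ)
    (hu : ∀ n : Fin N, ∀ m : ℕ, m ≤ M →
      u n m - (m : ℝ) * δ ≤ ut n m ∧ ut n m ≤ u n m)
    (ytstar : Fin N → ℕ)
    (hyt_mem : ∀ S : Finset (Fin N), ∑ n ∈ S, (ytstar n : ℤ) ≤ ft S)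
    (hyt_opt : ∀ y : Fin N → ℕ, (∀ S : Finset (Fin N), ∑ n ∈ S, (y n : ℤ) ≤ ft S) →
      ∑ n, ut n (y n) ≤ ∑ n, ut n (ytstar n)) :
    ∀ y : Fin N → ℕ, (∀ S : Finset (Fin N), ∑ n ∈ S, (y n : ℤ) ≤ ft S) →
      ∑ n, u n (y n) - ∑ n, u n (ytstar n) ≤ (M : ℝ) * δ := by
  intro y hy
  -- bound each coordinate by M
  have hle : ∀ (z : Fin N → ℕ), (∀ S : Finset (Fin N), ∑ n ∈ S, (z n : ℤ) ≤ ft S) →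
      ∀ n, z n ≤ M := by
    intro z hz n
    have h1 := hz {n}
    simp at h1
    have h2 := hf_mono {n} Finset.univ (Finset.subset_univ _)
    have : (z n : ℤ) ≤ (M : ℤ) := h1.trans (h2.trans_eq hf_univ)
    exact_mod_cast this
  have hsum : ∀ (z : Fin N → ℕ), (∀ S : Finset (Fin N), ∑ n ∈ S, (z n : ℤ) ≤ ft S) →
      (∑ n, (z n : ℝ)) ≤ (M : ℝ) := by
    intro z hz
    have := (hz Finset.univ).trans_eq hf_univ
    exact_mod_cast (by exact_mod_cast this : (∑ n, (z n : ℤ) : ℤ) ≤ (M : ℤ))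
  have h1 : ∑ n, u n (y n) ≤ ∑ n, ut n (y n) + (M : ℝ) * δ := by
    calc ∑ n, u n (y n) ≤ ∑ n, (ut n (y n) + (y n : ℝ) * δ) := by
          apply Finset.sum_le_sum
          intro n _
          have := (hu n (y n) (hle y hy n)).1
          linarith
      _ = ∑ n, ut n (y n) + (∑ n, (y n : ℝ)) * δ := by
          rw [Finset.sum_add_distrib, Finset.sum_mul]
      _ ≤ ∑ n, ut n (y n) + (M : ℝ) * δ := by
          have := hsum y hy
          nlinarith
  have h2 : ∑ n, ut n (ytstar n) ≤ ∑ n, u n (ytstar n) := by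
    apply Finset.sum_le_sum
    intro n _
    exact (hu n (ytstar n) (hle ytstar hyt_mem n)).2
  have h3 := hyt_opt y hy
  linarith
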